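/- For the line bundle O(1) over ℙ¹ realized as ℙ² \ {[0:0:1]} with projection π([z₀:z₁:z₂]) = [z₀:z₁] and bundle metric with length function χ([z₀:z₁:z₂]) = |z₂|²/(|z₀|²+|z₁|²), in the affine chart (z,w) ↦ the point with coordinates corresponding to z₀ = 1, the 2×2 Hermitian matrix (1/(|z|²+|w|²)³) · [[ |z|²(1+c|w|²) − |w|² + c|w|⁴ , (2 − c(|z|²+|w|²)) z w̄ ], [ (2 − c(|z|²+|w|²)) z̄ w , (1+c|z|²)|w|² − |z|² + c|z|⁴ ]] is not positive definite for any c > 0; i.e., for every c > 0 there exists (z,w) ∈ ℂ² \ {0} at which this matrix fails to be positive definite. -/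

import Mathlib

open Complex
open scoped ComplexOrder

/-- For the bundle metric on `O(1) = ℙ² \ {[0:0:1]} → ℙ¹` with
length function `χ([z₀:z₁:z₂]) = |z₂|²/(|z₀|²+|z₁|²)`, the Hermitian matrix of
`i∂∂̄χ + c·π*ω_FS` in the affine chart `(z,w)`, namely
`(|z|²+|w|²)⁻³ · [[|z|²(1+c|w|²) − |w|² + c|w|⁴, (2 − c(|z|²+|w|²)) z w̄],
[(2 − c(|z|²+|w|²)) z̄ w, (1+c|z|²)|w|² − |z|² + c|z|⁴]]`,
fails to be positive definite at some `(z,w) ∈ ℂ² \ {0}`, for every `c > 0`. -/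
theorem stmt10 :
    ∀ c : ℝ, 0 < c → ∃ z w : ℂ, (z, w) ≠ (0, 0) ∧
      ¬ Matrix.PosDef
        (((normSq z + normSq w) ^ 3)⁻¹ •
          !![((normSq z * (1 + c * normSq w) - normSq w + c * normSq w ^ 2 : ℝ) : ℂ),
              ((2 - c * (normSq z + normSq w) : ℝ) : ℂ) * z * (starRingEnd ℂ w);
             ((2 - c * (normSq z + normSq w) : ℝ) : ℂ) * (starRingEnd ℂ z) * w,
              (((1 + c * normSq z) * normSq w - normSq z + c * normSq z ^ 2 : ℝ) : ℂ)]) := by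
  intro c hc
  set t : ℝ := 1 / (2 * c) with ht
  have htpos : 0 < t := by positivity
  refine ⟨(Real.sqrt t : ℂ), 0, ?_, ?_⟩
  · simp only [ne_eq, Prod.mk.injEq, not_and]
    intro h
    exfalso
    have : Real.sqrt t ≠ 0 := by positivity
    exact this (by exact_mod_cast h)
  · intro hpd
    have hz : normSq ((Real.sqrt t : ℝ) : ℂ) = t := by
      simp [normSq_ofReal, Real.mul_self_sqrt htpos.le]
    have h2 := hpd.dotProduct_mulVec_pos (x := ![0, 1]) (by
      intro h
      have := congrFun h 1
      simp at this)
    rw [Complex.lt_def] at h2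
    have hre := h2.1
    simp only [dotProduct, Matrix.mulVec, Fin.sum_univ_two, hz, normSq_zero,
      Matrix.smul_apply, Matrix.cons_val', Matrix.cons_val_zero, Matrix.cons_val_one,
      Matrix.head_cons, Matrix.head_fin_const, Matrix.empty_val', Matrix.cons_val_fin_one,
      Pi.star_apply, Matrix.cons_val_one, smul_eq_mul, map_zero, mul_zero, zero_mul,
      add_zero, zero_add, star_zero, star_one, one_mul, Complex.zero_re] at hre
    simp only [hz, normSq_zero, add_zero, Matrix.mulVec, dotProduct,
      Fin.sum_univ_two, Matrix.smul_apply, Matrix.cons_val_one, Matrix.cons_val_zero,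
      Matrix.head_cons, Matrix.cons_val', Matrix.empty_val', Matrix.cons_val_fin_one,
      Pi.star_apply, star_zero, star_one, zero_mul, mul_zero, zero_add, one_mul,
      mul_one, Complex.smul_re, Complex.ofReal_re, Complex.zero_re] at hre
    norm_num [Matrix.cons_val_one, Matrix.head_cons, Matrix.head_fin_const,
      smul_eq_mul, ← Complex.ofReal_pow] at hre
    have hct : c * t = 1 / 2 := by
      rw [ht]; field_simp
    have hinv : (0:ℝ) < (t ^ 3)⁻¹ := by positivity
    have hneg : (0 - t + c * t ^ 2 : ℝ) < 0 := by nlinarith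
    nlinarith [mul_pos hinv (neg_pos.mpr hneg)]
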